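/- For a real symmetric n×n matrix H, constant K > 0 and the dual norm N*[v,r] := (Σ_μ |E^μ v|²/((|μ|r)^{1/2}+(Kr²)^{1/3})²)^{1/2}, define N*[v] := inf{r > 0 : N*[v,r] < 1}. Then for all v, w ∈ ℝⁿ: (N*[v+w])^{1/2} ≤ (N*[v])^{1/2} + (N*[w])^{1/2}. -/

import Mathlib

open scoped RealInnerProductSpace

noncomputable def Eproj {n : ℕ} (H : Matrix (Fin n) (Fin n) ℝ) (μ : ℝ) :
    EuclideanSpace ℝ (Fin n) →L[ℝ] EuclideanSpace ℝ (Fin n) :=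
  (Module.End.eigenspace (Matrix.toEuclideanLin H) μ).subtypeL.comp
    (Submodule.orthogonalProjection (Module.End.eigenspace (Matrix.toEuclideanLin H) μ))

/-- The nonisotropic norm `N[v,r]`, with the sum running over the eigenvalues of `H`. -/
noncomputable def Nnorm {n : ℕ} (H : Matrix (Fin n) (Fin n) ℝ) (hH : H.IsHermitian)
    (K : ℝ) (v : EuclideanSpace ℝ (Fin n)) (r : ℝ) : ℝ :=
  r⁻¹ * Real.sqrt (∑ μ ∈ Finset.image hH.eigenvalues Finset.univ,
    ‖Eproj H μ v‖ ^ 2 * (((abs μ) * r) ^ ((1:ℝ)/2) + (K * r ^ 2) ^ ((1:ℝ)/3)) ^ 2)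

/-- The dual nonisotropic norm `N*[v,r]`. -/
noncomputable def Ndual {n : ℕ} (H : Matrix (Fin n) (Fin n) ℝ) (hH : H.IsHermitian)
    (K : ℝ) (v : EuclideanSpace ℝ (Fin n)) (r : ℝ) : ℝ :=
  Real.sqrt (∑ μ ∈ Finset.image hH.eigenvalues Finset.univ,
    ‖Eproj H μ v‖ ^ 2 / (((abs μ) * r) ^ ((1:ℝ)/2) + (K * r ^ 2) ^ ((1:ℝ)/3)) ^ 2)

/-- `N*[v] = inf { r > 0 : N*[v,r] < 1 }`. -/
noncomputable def NdualInf {n : ℕ} (H : Matrix (Fin n) (Fin n) ℝ) (hH : H.IsHermitian)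
    (K : ℝ) (v : EuclideanSpace ℝ (Fin n)) : ℝ :=
  sInf {r : ℝ | 0 < r ∧ Ndual H hH K v r < 1}

/-- Abbreviation for the denominator. -/
noncomputable def Dfun (K μ r : ℝ) : ℝ :=
  ((abs μ) * r) ^ ((1:ℝ)/2) + (K * r ^ 2) ^ ((1:ℝ)/3)

lemma Dfun_pos {K r : ℝ} (μ : ℝ) (hK : 0 < K) (hr : 0 < r) : 0 < Dfun K μ r :=
  add_pos_of_nonneg_of_pos (Real.rpow_nonneg (by positivity) _)
    (Real.rpow_pos_of_pos (by positivity) _)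

lemma Dfun_scale {K s r : ℝ} (μ : ℝ) (hK : 0 < K) (hs : 0 < s) (hsr : s ≤ r) :
    (r / s) ^ ((1:ℝ)/2) * Dfun K μ s ≤ Dfun K μ r := by
  have hrs : (1:ℝ) ≤ r / s := (one_le_div hs).mpr hsr
  have hrs0 : (0:ℝ) ≤ r / s := by linarith
  have hr : 0 < r := lt_of_lt_of_le hs hsr
  unfold Dfun
  rw [mul_add]
  have h1 : (r / s) ^ ((1:ℝ)/2) * ((abs μ) * s) ^ ((1:ℝ)/2) = ((abs μ) * r) ^ ((1:ℝ)/2) := by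
    rw [← Real.mul_rpow hrs0 (by positivity)]
    congr 1
    field_simp
  have h2 : (r / s) ^ ((1:ℝ)/2) * (K * s ^ 2) ^ ((1:ℝ)/3) ≤ (K * r ^ 2) ^ ((1:ℝ)/3) := by
    have e1 : (K * r ^ 2) = (r/s)^2 * (K * s ^ 2) := by
      field_simp
    rw [e1]
    conv_rhs => rw [Real.mul_rpow (by positivity) (by positivity)]
    have hle : (r / s) ^ ((1:ℝ)/2) ≤ ((r / s) ^ 2) ^ ((1:ℝ)/3) := by
      calc (r / s) ^ ((1:ℝ)/2) ≤ (r / s) ^ ((2:ℝ)/3) :=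
            Real.rpow_le_rpow_of_exponent_le hrs (by norm_num)
        _ = ((r / s) ^ 2) ^ ((1:ℝ)/3) := by
            rw [← Real.rpow_natCast (r/s) 2, ← Real.rpow_mul hrs0]
            norm_num
    exact mul_le_mul_of_nonneg_right hle (Real.rpow_nonneg (by positivity) _)
  rw [h1]
  gcongr

lemma Dfun_sq_scale {K s r : ℝ} (μ : ℝ) (hK : 0 < K) (hs : 0 < s) (hsr : s ≤ r) :
    (r / s) * Dfun K μ s ^ 2 ≤ Dfun K μ r ^ 2 := by
  have hr : 0 < r := lt_of_lt_of_le hs hsr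
  have hrs0 : (0:ℝ) ≤ r / s := by positivity
  have h := Dfun_scale μ hK hs hsr
  have hnn : 0 ≤ (r / s) ^ ((1:ℝ)/2) * Dfun K μ s :=
    mul_nonneg (Real.rpow_nonneg hrs0 _) (Dfun_pos μ hK hs).le
  have h2 := pow_le_pow_left₀ hnn h 2
  calc (r / s) * Dfun K μ s ^ 2
      = ((r / s) ^ ((1:ℝ)/2) * Dfun K μ s) ^ 2 := by
        rw [mul_pow, ← Real.rpow_natCast ((r/s) ^ ((1:ℝ)/2)) 2, ← Real.rpow_mul hrs0]
        norm_num
    _ ≤ Dfun K μ r ^ 2 := h2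

/-- Minkowski inequality for finite weighted ℓ² sums. -/
lemma sqrt_sum_sq_add_le (F : Finset ℝ) (f g : ℝ → ℝ) :
    Real.sqrt (∑ μ ∈ F, (f μ + g μ) ^ 2) ≤
      Real.sqrt (∑ μ ∈ F, f μ ^ 2) + Real.sqrt (∑ μ ∈ F, g μ ^ 2) := by
  have h := norm_add_le ((WithLp.equiv 2 (↥F → ℝ)).symm (fun i => f i))
      ((WithLp.equiv 2 (↥F → ℝ)).symm (fun i => g i))
  rw [EuclideanSpace.norm_eq, EuclideanSpace.norm_eq, EuclideanSpace.norm_eq] at h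
  simp only [PiLp.add_apply, WithLp.equiv_symm_apply, PiLp.toLp_apply, WithLp.ofLp_toLp, Real.norm_eq_abs, sq_abs] at h
  rw [Finset.sum_coe_sort F (fun μ => (f μ + g μ) ^ 2),
    Finset.sum_coe_sort F (fun μ => f μ ^ 2),
    Finset.sum_coe_sort F (fun μ => g μ ^ 2)] at h
  exact h

lemma ndual_key {n : ℕ} (H : Matrix (Fin n) (Fin n) ℝ) (hH : H.IsHermitian)
    (K : ℝ) (hK : 0 < K) (v w : EuclideanSpace ℝ (Fin n)) {s t : ℝ}
    (hs : 0 < s) (ht : 0 < t)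
    (hvs : Ndual H hH K v s < 1) (hwt : Ndual H hH K w t < 1) :
    Ndual H hH K (v + w) ((Real.sqrt s + Real.sqrt t) ^ 2) < 1 := by
  set F := Finset.image hH.eigenvalues Finset.univ with hF
  set r := (Real.sqrt s + Real.sqrt t) ^ 2 with hr
  have hsq : 0 < Real.sqrt s + Real.sqrt t := by
    have := Real.sqrt_pos.mpr hs
    have := Real.sqrt_nonneg t
    linarith
  have hr0 : 0 < r := by positivity
  have hsr : s ≤ r := by
    nlinarith [Real.sq_sqrt hs.le, Real.sqrt_nonneg s, Real.sqrt_nonneg t,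
      Real.sqrt_pos.mpr hs]
  have htr : t ≤ r := by
    nlinarith [Real.sq_sqrt ht.le, Real.sqrt_nonneg s, Real.sqrt_nonneg t,
      Real.sqrt_pos.mpr ht]
  -- step 1: triangle for the projections, then Minkowski
  have step1 : Ndual H hH K (v + w) r ≤
      Real.sqrt (∑ μ ∈ F, (‖Eproj H μ v‖ / Dfun K μ r) ^ 2) +
      Real.sqrt (∑ μ ∈ F, (‖Eproj H μ w‖ / Dfun K μ r) ^ 2) := by
    refine le_trans ?_ (sqrt_sum_sq_add_le F (fun μ => ‖Eproj H μ v‖ / Dfun K μ r)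
      (fun μ => ‖Eproj H μ w‖ / Dfun K μ r))
    unfold Ndual
    apply Real.sqrt_le_sqrt
    apply Finset.sum_le_sum
    intro μ _
    have hD : 0 < Dfun K μ r := Dfun_pos μ hK hr0
    have htri : ‖Eproj H μ (v + w)‖ ≤ ‖Eproj H μ v‖ + ‖Eproj H μ w‖ := by
      rw [map_add]; exact norm_add_le _ _
    rw [← add_div, div_pow]
    show ‖Eproj H μ (v + w)‖ ^ 2 / Dfun K μ r ^ 2 ≤ _
    have hnum : ‖Eproj H μ (v + w)‖ ^ 2 ≤ (‖Eproj H μ v‖ + ‖Eproj H μ w‖) ^ 2 := by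
      nlinarith [norm_nonneg (Eproj H μ (v + w)), norm_nonneg (Eproj H μ v),
        norm_nonneg (Eproj H μ w)]
    gcongr
  -- step 2: rescale each term
  have step2 : ∀ (u : EuclideanSpace ℝ (Fin n)) (τ : ℝ), 0 < τ → τ ≤ r →
      Real.sqrt (∑ μ ∈ F, (‖Eproj H μ u‖ / Dfun K μ r) ^ 2) ≤
        Real.sqrt (τ / r) * Ndual H hH K u τ := by
    intro u τ hτ hτr
    have hsum : ∑ μ ∈ F, (‖Eproj H μ u‖ / Dfun K μ r) ^ 2 ≤
        (τ / r) * ∑ μ ∈ F, ‖Eproj H μ u‖ ^ 2 / Dfun K μ τ ^ 2 := by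
      rw [Finset.mul_sum]
      apply Finset.sum_le_sum
      intro μ _
      have hDτ : 0 < Dfun K μ τ := Dfun_pos μ hK hτ
      have hDr : 0 < Dfun K μ r := Dfun_pos μ hK hr0
      have hscale := Dfun_sq_scale μ hK hτ hτr
      rw [div_pow]
      have e2 : (τ / r) * (‖Eproj H μ u‖ ^ 2 / Dfun K μ τ ^ 2)
          = ‖Eproj H μ u‖ ^ 2 / ((r / τ) * Dfun K μ τ ^ 2) := by
        field_simp
      rw [e2]
      have hpos : 0 < (r / τ) * Dfun K μ τ ^ 2 := by positivity
      gcongr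
    calc Real.sqrt (∑ μ ∈ F, (‖Eproj H μ u‖ / Dfun K μ r) ^ 2)
        ≤ Real.sqrt ((τ / r) * ∑ μ ∈ F, ‖Eproj H μ u‖ ^ 2 / Dfun K μ τ ^ 2) :=
          Real.sqrt_le_sqrt hsum
      _ = Real.sqrt (τ / r) * Ndual H hH K u τ := by
          rw [Real.sqrt_mul (by positivity)]
          rfl
  have hv2 := step2 v s hs hsr
  have hw2 := step2 w t ht htr
  have hfrac : Real.sqrt (s / r) + Real.sqrt (t / r) = 1 := by
    rw [Real.sqrt_div hs.le, Real.sqrt_div ht.le, hr, Real.sqrt_sq hsq.le]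
    field_simp
  have hsrpos : 0 < Real.sqrt (s / r) := Real.sqrt_pos.mpr (by positivity)
  have htrpos : 0 < Real.sqrt (t / r) := Real.sqrt_pos.mpr (by positivity)
  have h1 : Real.sqrt (s / r) * Ndual H hH K v s < Real.sqrt (s / r) :=
    mul_lt_of_lt_one_right hsrpos hvs
  have h2 : Real.sqrt (t / r) * Ndual H hH K w t < Real.sqrt (t / r) :=
    mul_lt_of_lt_one_right htrpos hwt
  linarith

lemma sqrt_add_le_sqrt_add_sqrt {a c : ℝ} (ha : 0 ≤ a) (hc : 0 ≤ c) :
    Real.sqrt (a + c) ≤ Real.sqrt a + Real.sqrt c := by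
  have h : a + c ≤ (Real.sqrt a + Real.sqrt c) ^ 2 := by
    nlinarith [Real.sq_sqrt ha, Real.sq_sqrt hc, Real.sqrt_nonneg a, Real.sqrt_nonneg c]
  calc Real.sqrt (a + c) ≤ Real.sqrt ((Real.sqrt a + Real.sqrt c) ^ 2) :=
        Real.sqrt_le_sqrt h
    _ = Real.sqrt a + Real.sqrt c := Real.sqrt_sq (by positivity)

theorem stmt5 {n : ℕ} (H : Matrix (Fin n) (Fin n) ℝ) (hH : H.IsHermitian)
    (K : ℝ) (hK : 0 < K) (v w : EuclideanSpace ℝ (Fin n))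
    (hv : {r : ℝ | 0 < r ∧ Ndual H hH K v r < 1}.Nonempty)
    (hw : {r : ℝ | 0 < r ∧ Ndual H hH K w r < 1}.Nonempty)
    (hvw : {r : ℝ | 0 < r ∧ Ndual H hH K (v + w) r < 1}.Nonempty)
    (hv0 : 0 < NdualInf H hH K v) (hw0 : 0 < NdualInf H hH K w) :
    (NdualInf H hH K (v + w)) ^ ((1:ℝ)/2) ≤
      (NdualInf H hH K v) ^ ((1:ℝ)/2) + (NdualInf H hH K w) ^ ((1:ℝ)/2) := by
  rw [← Real.sqrt_eq_rpow, ← Real.sqrt_eq_rpow, ← Real.sqrt_eq_rpow]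
  set a := NdualInf H hH K v with ha
  set b := NdualInf H hH K w with hb
  have hbdd : ∀ u : EuclideanSpace ℝ (Fin n),
      BddBelow {r : ℝ | 0 < r ∧ Ndual H hH K u r < 1} :=
    fun u => ⟨0, fun x hx => hx.1.le⟩
  apply le_of_forall_pos_le_add
  intro ε hε
  have hε2 : 0 < (ε / 2) ^ 2 := by positivity
  obtain ⟨s, hsS, hslt⟩ := Real.lt_sInf_add_pos hv hε2
  obtain ⟨t, htS, htlt⟩ := Real.lt_sInf_add_pos hw hε2
  have hkey := ndual_key H hH K hK v w hsS.1 htS.1 hsS.2 htS.2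
  have hmemS : (Real.sqrt s + Real.sqrt t) ^ 2 ∈
      {r : ℝ | 0 < r ∧ Ndual H hH K (v + w) r < 1} := by
    constructor
    · have := Real.sqrt_pos.mpr hsS.1
      have := Real.sqrt_nonneg t
      positivity
    · exact hkey
  have hle : NdualInf H hH K (v + w) ≤ (Real.sqrt s + Real.sqrt t) ^ 2 :=
    csInf_le (hbdd _) hmemS
  have h1 : Real.sqrt (NdualInf H hH K (v + w)) ≤ Real.sqrt s + Real.sqrt t := by
    calc Real.sqrt (NdualInf H hH K (v + w))
        ≤ Real.sqrt ((Real.sqrt s + Real.sqrt t) ^ 2) := Real.sqrt_le_sqrt hle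
      _ = Real.sqrt s + Real.sqrt t := Real.sqrt_sq (by positivity)
  have ha0 : 0 ≤ a := Real.sInf_nonneg (fun x hx => hx.1.le)
  have hb0 : 0 ≤ b := Real.sInf_nonneg (fun x hx => hx.1.le)
  have h2 : Real.sqrt s ≤ Real.sqrt a + ε / 2 := by
    calc Real.sqrt s ≤ Real.sqrt (a + (ε / 2) ^ 2) := Real.sqrt_le_sqrt hslt.le
      _ ≤ Real.sqrt a + Real.sqrt ((ε / 2) ^ 2) := sqrt_add_le_sqrt_add_sqrt ha0 hε2.le
      _ = Real.sqrt a + ε / 2 := by rw [Real.sqrt_sq (by positivity)]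
  have h3 : Real.sqrt t ≤ Real.sqrt b + ε / 2 := by
    calc Real.sqrt t ≤ Real.sqrt (b + (ε / 2) ^ 2) := Real.sqrt_le_sqrt htlt.le
      _ ≤ Real.sqrt b + Real.sqrt ((ε / 2) ^ 2) := sqrt_add_le_sqrt_add_sqrt hb0 hε2.le
      _ = Real.sqrt b + ε / 2 := by rw [Real.sqrt_sq (by positivity)]
  linarith
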